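/- Let a and b be strings of symbols of lengths n and m respectively over an alphabet Σ, and let 0 < γ < 1. If strings ã and b̃ are obtained by deleting at most ⌊γ(n+m)⌋ terms from a and b altogether, then f̄(a, b) ≥ f̄(ã, b̃) − 2γ. -/

import Mathlib

open MeasureTheory

namespace Paper

variable {σ : Type*}

/-- The concatenation of `t` copies of the string `w`. -/
def rep (w : List σ) (t : ℕ) : List σ := (List.replicate t w).flatten

/-- `I` is a match between the strings `a` and `b` (with 0-based indices):
a collection of pairs of indices, strictly increasing in both coordinates,
pairing equal symbols. -/
def IsMatch (a b : List σ) (I : List (ℕ × ℕ)) : Prop :=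
  I.Chain' (fun p q => p.1 < q.1 ∧ p.2 < q.2) ∧
  ∀ p ∈ I, p.1 < a.length ∧ p.2 < b.length ∧ a[p.1]? = b[p.2]?

/-- The largest cardinality of a match between `a` and `b`. -/
noncomputable def maxMatch (a b : List σ) : ℕ :=
  sSup {r | ∃ I, IsMatch a b I ∧ I.length = r}

/-- The `f̄` distance between two strings. -/
noncomputable def fbar (a b : List σ) : ℝ :=
  1 - 2 * (maxMatch a b : ℝ) / (a.length + b.length)

/-- `I` is an approximate match between the strings `a` and `b` (0-based indices):
pairs of indices, nondecreasing in each coordinate and strictly increasing as pairs,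
pairing equal symbols, such that the set of indices paired with any given index is
contained in a set of three consecutive indices. -/
def IsApproxMatch (a b : List σ) (I : List (ℕ × ℕ)) : Prop :=
  I.Chain' (fun p q => p.1 ≤ q.1 ∧ p.2 ≤ q.2 ∧ p ≠ q) ∧
  (∀ p ∈ I, p.1 < a.length ∧ p.2 < b.length ∧ a[p.1]? = b[p.2]?) ∧
  (∀ p ∈ I, (∃ s, ∀ q ∈ I, q.1 = p.1 → q.2 ∈ ({s, s+1, s+2} : Set ℕ)) ∧
            (∃ t, ∀ q ∈ I, q.2 = p.2 → q.1 ∈ ({t, t+1, t+2} : Set ℕ)))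

/-- The largest cardinality of an approximate match between `a` and `b`. -/
noncomputable def maxApproxMatch (a b : List σ) : ℕ :=
  sSup {r | ∃ I, IsApproxMatch a b I ∧ I.length = r}

/-- The approximate distance `f̃` between two strings. -/
noncomputable def ftilde (a b : List σ) : ℝ :=
  max 0 (1 - 2 * (maxApproxMatch a b : ℝ) / (a.length + b.length))

end Paper

open Paper List

section Aux
variable {σ : Type*}

instance matchRelTrans : IsTrans (ℕ × ℕ) (fun p q => p.1 < q.1 ∧ p.2 < q.2) :=
  ⟨fun _ _ _ h1 h2 => ⟨h1.1.trans h2.1, h1.2.trans h2.2⟩⟩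

lemma isMatch_iff {a b : List σ} {I : List (ℕ × ℕ)} : IsMatch a b I ↔
    I.Pairwise (fun p q => p.1 < q.1 ∧ p.2 < q.2) ∧
    ∀ p ∈ I, p.1 < a.length ∧ p.2 < b.length ∧ a[p.1]? = b[p.2]? := by
  rw [IsMatch]; exact and_congr_left' List.isChain_iff_pairwise

lemma isMatch_nil (a b : List σ) : IsMatch a b [] := ⟨List.isChain_nil, by simp⟩

lemma Paper.IsMatch.length_le {a b : List σ} {I : List (ℕ × ℕ)} (h : IsMatch a b I) :
    I.length ≤ a.length := by
  rw [isMatch_iff] at h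
  have hnd : (I.map Prod.fst).Nodup :=
    List.pairwise_map.mpr (h.1.imp fun hpq => Nat.ne_of_lt hpq.1)
  have hsub : (I.map Prod.fst).toFinset ⊆ Finset.range a.length := by
    intro i hi
    simp only [List.mem_toFinset, List.mem_map] at hi
    obtain ⟨p, hp, rfl⟩ := hi
    exact Finset.mem_range.mpr (h.2 p hp).1
  calc I.length = (I.map Prod.fst).length := (List.length_map _).symm
    _ = (I.map Prod.fst).toFinset.card := (List.toFinset_card_of_nodup hnd).symm
    _ ≤ (Finset.range a.length).card := Finset.card_le_card hsub
    _ = a.length := Finset.card_range _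

/-- shift the first coordinates up by one -/
lemma Paper.IsMatch.consLeft {a b : List σ} {I : List (ℕ × ℕ)} (x : σ) (h : IsMatch a b I) :
    IsMatch (x :: a) b (I.map fun p => (p.1 + 1, p.2)) := by
  rw [isMatch_iff] at h ⊢
  constructor
  · rw [List.pairwise_map]
    exact h.1.imp (fun hpq => ⟨by omega, hpq.2⟩)
  · intro p hp
    simp only [List.mem_map] at hp
    obtain ⟨q, hq, rfl⟩ := hp
    obtain ⟨h1, h2, h3⟩ := h.2 q hq
    exact ⟨by simpa using h1, h2, by simpa using h3⟩

lemma Paper.IsMatch.consRight {a b : List σ} {I : List (ℕ × ℕ)} (x : σ) (h : IsMatch a b I) :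
    IsMatch a (x :: b) (I.map fun p => (p.1, p.2 + 1)) := by
  rw [isMatch_iff] at h ⊢
  constructor
  · rw [List.pairwise_map]
    exact h.1.imp (fun hpq => ⟨hpq.1, by omega⟩)
  · intro p hp
    simp only [List.mem_map] at hp
    obtain ⟨q, hq, rfl⟩ := hp
    obtain ⟨h1, h2, h3⟩ := h.2 q hq
    exact ⟨h1, by simpa using h2, by simpa using h3⟩

lemma Paper.IsMatch.cons₂ {a b : List σ} {I : List (ℕ × ℕ)} (x : σ) (h : IsMatch a b I) :
    IsMatch (x :: a) (x :: b) ((0, 0) :: I.map fun p => (p.1 + 1, p.2 + 1)) := by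
  have h' : IsMatch (x :: a) (x :: b) (I.map fun p => (p.1 + 1, p.2 + 1)) := by
    have := (h.consLeft x).consRight x
    rw [List.map_map] at this
    convert this using 2
    rfl
  rw [isMatch_iff] at h' ⊢
  constructor
  · rw [List.pairwise_cons]
    refine ⟨?_, h'.1⟩
    intro q hq
    simp only [List.mem_map] at hq
    obtain ⟨r, _, rfl⟩ := hq
    exact ⟨by omega, by omega⟩
  · intro p hp
    rcases List.mem_cons.mp hp with rfl | hp
    · exact ⟨by simp, by simp, by simp⟩
    · exact h'.2 p hp

/-- shift the first coordinates down by one -/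
lemma Paper.IsMatch.tailLeft {a b : List σ} {x : σ} {I : List (ℕ × ℕ)}
    (h : IsMatch (x :: a) b I) (h1 : ∀ p ∈ I, 1 ≤ p.1) :
    IsMatch a b (I.map fun p => (p.1 - 1, p.2)) := by
  rw [isMatch_iff] at h ⊢
  constructor
  · rw [List.pairwise_map]
    refine List.Pairwise.imp_of_mem ?_ h.1
    intro p q hp hq hpq
    exact ⟨by have := h1 p hp; omega, hpq.2⟩
  · intro p hp
    simp only [List.mem_map] at hp
    obtain ⟨q, hq, rfl⟩ := hp
    obtain ⟨hq1, hq2, hq3⟩ := h.2 q hq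
    obtain ⟨k, hk⟩ : ∃ k, q.1 = k + 1 := ⟨q.1 - 1, by have := h1 q hq; omega⟩
    simp only [hk, List.getElem?_cons_succ, List.length_cons] at hq1 hq3
    exact ⟨by omega, hq2, by simp [hk, hq3]⟩

lemma Paper.IsMatch.tailRight {a b : List σ} {x : σ} {I : List (ℕ × ℕ)}
    (h : IsMatch a (x :: b) I) (h1 : ∀ p ∈ I, 1 ≤ p.2) :
    IsMatch a b (I.map fun p => (p.1, p.2 - 1)) := by
  rw [isMatch_iff] at h ⊢
  constructor
  · rw [List.pairwise_map]
    refine List.Pairwise.imp_of_mem ?_ h.1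
    intro p q hp hq hpq
    exact ⟨hpq.1, by have := h1 p hp; omega⟩
  · intro p hp
    simp only [List.mem_map] at hp
    obtain ⟨q, hq, rfl⟩ := hp
    obtain ⟨hq1, hq2, hq3⟩ := h.2 q hq
    obtain ⟨k, hk⟩ : ∃ k, q.2 = k + 1 := ⟨q.2 - 1, by have := h1 q hq; omega⟩
    simp only [hk, List.getElem?_cons_succ, List.length_cons] at hq2 hq3
    exact ⟨hq1, by omega, by simp [hk, hq3]⟩

/-- Common subsequences give matches. -/
lemma exists_match_of_sublists :
    ∀ N (a b c : List σ), a.length + b.length ≤ N → c <+ a → c <+ b →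
      ∃ I, IsMatch a b I ∧ I.length = c.length := by
  intro N
  induction N with
  | zero =>
    intro a b c hN hca hcb
    have ha : a = [] := by cases a <;> simp_all
    subst ha
    have : c = [] := List.sublist_nil.mp hca
    subst this
    exact ⟨[], isMatch_nil _ _, rfl⟩
  | succ N ih =>
    intro a b c hN hca hcb
    cases c with
    | nil => exact ⟨[], isMatch_nil _ _, rfl⟩
    | cons x c' =>
      cases a with
      | nil => exact absurd (List.sublist_nil.mp hca) (by simp)
      | cons a0 a' =>
        rcases List.cons_sublist_cons'.mp hca with hca' | ⟨rfl, hca'⟩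
        · obtain ⟨I, hI, hlen⟩ := ih a' b (x :: c') (by simp at hN ⊢; omega) hca' hcb
          exact ⟨I.map fun p => (p.1 + 1, p.2), hI.consLeft a0, by simpa using hlen⟩
        · cases b with
          | nil => exact absurd (List.sublist_nil.mp hcb) (by simp)
          | cons b0 b' =>
            rcases List.cons_sublist_cons'.mp hcb with hcb' | ⟨rfl, hcb'⟩
            · obtain ⟨I, hI, hlen⟩ := ih (x :: a') b' (x :: c')
                (by simp at hN ⊢; omega) (hca'.cons₂ x) hcb'
              exact ⟨I.map fun p => (p.1, p.2 + 1), hI.consRight b0, by simpa using hlen⟩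
            · obtain ⟨I, hI, hlen⟩ := ih a' b' c' (by simp at hN ⊢; omega) hca' hcb'
              exact ⟨(0, 0) :: I.map fun p => (p.1 + 1, p.2 + 1), hI.cons₂ x,
                by simpa using hlen⟩

/-- Matches give common subsequences. -/
lemma exists_sublists_of_match :
    ∀ N (a b : List σ) (I : List (ℕ × ℕ)), a.length + b.length ≤ N → IsMatch a b I →
      ∃ c, c <+ a ∧ c <+ b ∧ c.length = I.length := by
  intro N
  induction N with
  | zero =>
    intro a b I hN hI
    have ha : a = [] := by cases a <;> simp_all
    subst ha
    cases I with
    | nil => exact ⟨[], by simp⟩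
    | cons p I' => exact absurd (hI.2 p (by simp)).1 (by simp)
  | succ N ih =>
    intro a b I hN hI
    cases I with
    | nil => exact ⟨[], by simp⟩
    | cons p I' =>
      obtain ⟨hp1, hp2, hp3⟩ := hI.2 p (by simp)
      cases a with
      | nil => simp at hp1
      | cons a0 a' =>
        cases b with
        | nil => simp at hp2
        | cons b0 b' =>
          rw [isMatch_iff] at hI
          have hpw := hI.1
          rw [List.pairwise_cons] at hpw
          rcases Nat.eq_zero_or_pos p.1 with h1 | h1
          · rcases Nat.eq_zero_or_pos p.2 with h2 | h2
            · -- heads matched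
              have hab : a0 = b0 := by
                rw [h1] at hp3; rw [h2] at hp3; simpa using hp3
              have htail : IsMatch a' b' (I'.map fun q => (q.1 - 1, q.2 - 1)) := by
                have hI' : IsMatch (a0 :: a') (b0 :: b') I' := by
                  rw [isMatch_iff]
                  exact ⟨hpw.2, fun q hq => hI.2 q (List.mem_cons_of_mem _ hq)⟩
                have step1 := hI'.tailLeft (fun q hq => by
                  have := hpw.1 q hq; omega)
                have step2 := step1.tailRight (fun q hq => by
                  simp only [List.mem_map] at hq
                  obtain ⟨r, hr, rfl⟩ := hq
                  have := hpw.1 r hr; simp; omega)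
                rw [List.map_map] at step2
                convert step2 using 2
                rfl
              obtain ⟨c', hc1, hc2, hc3⟩ := ih a' b' _ (by simp at hN ⊢; omega) htail
              exact ⟨a0 :: c', hc1.cons₂ a0, hab ▸ hc2.cons₂ a0, by simpa using hc3⟩
            · -- p.2 ≥ 1 : drop b0
              have hall : ∀ q ∈ p :: I', 1 ≤ q.2 := by
                intro q hq
                rcases List.mem_cons.mp hq with rfl | hq
                · exact h2
                · have := hpw.1 q hq; omega
              have hI0 : IsMatch (a0 :: a') (b0 :: b') (p :: I') := by
                rw [isMatch_iff]; exact hI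
              have := hI0.tailRight hall
              obtain ⟨c, hc1, hc2, hc3⟩ := ih (a0 :: a') b' _ (by simp at hN ⊢; omega) this
              exact ⟨c, hc1, hc2.cons b0, by simpa using hc3⟩
          · -- p.1 ≥ 1 : drop a0
            have hall : ∀ q ∈ p :: I', 1 ≤ q.1 := by
              intro q hq
              rcases List.mem_cons.mp hq with rfl | hq
              · exact h1
              · have := hpw.1 q hq; omega
            have hI0 : IsMatch (a0 :: a') (b0 :: b') (p :: I') := by
              rw [isMatch_iff]; exact hI
            have := hI0.tailLeft hall
            obtain ⟨c, hc1, hc2, hc3⟩ := ih a' (b0 :: b') _ (by simp at hN ⊢; omega) this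
            exact ⟨c, hc1.cons a0, hc2, by simpa using hc3⟩

/-- Intersecting two sublists. -/
lemma sublist_inter : ∀ {a c t : List σ}, c <+ a → t <+ a →
    ∃ u, u <+ c ∧ u <+ t ∧ c.length + t.length ≤ a.length + u.length := by
  intro a
  induction a with
  | nil =>
    intro c t hc ht
    rw [List.sublist_nil] at hc ht
    subst hc; subst ht
    exact ⟨[], by simp⟩
  | cons x a' ih =>
    intro c t hc ht
    cases hc with
    | cons _ hc' =>
      cases ht with
      | cons _ ht' =>
        obtain ⟨u, h1, h2, h3⟩ := ih hc' ht'
        exact ⟨u, h1, h2, by simp; omega⟩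
      | cons_cons _ ht' =>
        obtain ⟨u, h1, h2, h3⟩ := ih hc' ht'
        exact ⟨u, h1, h2.cons x, by simp; omega⟩
    | cons_cons _ hc' =>
      cases ht with
      | cons _ ht' =>
        obtain ⟨u, h1, h2, h3⟩ := ih hc' ht'
        exact ⟨u, h1.cons x, h2, by simp; omega⟩
      | cons_cons _ ht' =>
        obtain ⟨u, h1, h2, h3⟩ := ih hc' ht'
        exact ⟨x :: u, h1.cons₂ x, h2.cons₂ x, by simp; omega⟩

lemma maxMatch_bddAbove (a b : List σ) :
    BddAbove {r | ∃ I, IsMatch a b I ∧ I.length = r} :=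
  ⟨a.length, fun r ⟨I, hI, hr⟩ => hr ▸ hI.length_le⟩

lemma exists_maxMatch (a b : List σ) : ∃ I, IsMatch a b I ∧ I.length = maxMatch a b := by
  have hne : {r | ∃ I, IsMatch a b I ∧ I.length = r}.Nonempty :=
    ⟨0, [], isMatch_nil a b, rfl⟩
  exact Nat.sSup_mem hne (maxMatch_bddAbove a b)

lemma le_maxMatch {a b : List σ} {I : List (ℕ × ℕ)} (h : IsMatch a b I) :
    I.length ≤ maxMatch a b :=
  le_csSup (maxMatch_bddAbove a b) ⟨I, h, rfl⟩

lemma maxMatch_key {a b ta tb : List σ} (hta : ta <+ a) (htb : tb <+ b) :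
    maxMatch a b + ta.length + tb.length ≤ maxMatch ta tb + a.length + b.length := by
  obtain ⟨I, hI, hIlen⟩ := exists_maxMatch a b
  obtain ⟨c, hca, hcb, hclen⟩ :=
    exists_sublists_of_match (a.length + b.length) a b I le_rfl hI
  obtain ⟨u, huc, huta, hu⟩ := sublist_inter hca hta
  obtain ⟨v, hvu, hvtb, hv⟩ := sublist_inter (huc.trans hcb) htb
  obtain ⟨J, hJ, hJlen⟩ :=
    exists_match_of_sublists (ta.length + tb.length) ta tb v le_rfl (hvu.trans huta) hvtb
  have hmax := le_maxMatch hJ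
  omega

end Aux

/-- If `ta` and `tb` are obtained from strings `a` and `b` by deleting
at most `⌊γ(n+m)⌋` terms altogether, where `0 < γ < 1`, then
`f̄(a,b) ≥ f̄(ta,tb) − 2γ`. -/
theorem statement0 {σ : Type*} (γ : ℝ) (hγ0 : 0 < γ) (hγ1 : γ < 1)
    (a b ta tb : List σ) (hta : ta <+ a) (htb : tb <+ b)
    (hcount : (a.length - ta.length) + (b.length - tb.length) ≤
      ⌊γ * ((a.length : ℝ) + b.length)⌋₊) :
    fbar ta tb - 2 * γ ≤ fbar a b := by
  have hn' : ta.length ≤ a.length := hta.length_le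
  have hm' : tb.length ≤ b.length := htb.length_le
  have key := maxMatch_key hta htb
  rcases Nat.eq_zero_or_pos (a.length + b.length) with h0 | h0
  · have ha0 : a.length = 0 := by omega
    have hb0 : b.length = 0 := by omega
    have hta0 : ta.length = 0 := by omega
    have htb0 : tb.length = 0 := by omega
    simp only [fbar, ha0, hb0, hta0, htb0, Nat.cast_zero, add_zero, div_zero]
    linarith
  · have h0' : 0 < ta.length + tb.length := by
      by_contra hcon
      push_neg at hcon
      have hd : a.length + b.length ≤ ⌊γ * ((a.length : ℝ) + b.length)⌋₊ := by omega
      have h1 : ((a.length + b.length : ℕ) : ℝ) ≤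
          (⌊γ * ((a.length : ℝ) + b.length)⌋₊ : ℝ) := Nat.cast_le.mpr hd
      have h3 : (0:ℝ) < (a.length : ℝ) + b.length := by exact_mod_cast h0
      have h2 : (⌊γ * ((a.length : ℝ) + b.length)⌋₊ : ℝ) ≤
          γ * ((a.length : ℝ) + b.length) := Nat.floor_le (by positivity)
      push_cast at h1
      nlinarith
    have hP : (0:ℝ) < (a.length : ℝ) + b.length := by exact_mod_cast h0
    have hQ : (0:ℝ) < (ta.length : ℝ) + tb.length := by exact_mod_cast h0'
    have hQP : ((ta.length : ℝ) + tb.length) ≤ (a.length : ℝ) + b.length := by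
      have : ta.length + tb.length ≤ a.length + b.length := by omega
      exact_mod_cast this
    have hkey : (maxMatch a b : ℝ) + ta.length + tb.length ≤
        (maxMatch ta tb : ℝ) + a.length + b.length := by exact_mod_cast key
    have hM' : (0:ℝ) ≤ (maxMatch ta tb : ℝ) := Nat.cast_nonneg _
    have hd : ((a.length : ℝ) + b.length) - ((ta.length : ℝ) + tb.length) ≤
        γ * ((a.length : ℝ) + b.length) := by
      have h2 : (⌊γ * ((a.length : ℝ) + b.length)⌋₊ : ℝ) ≤
          γ * ((a.length : ℝ) + b.length) := Nat.floor_le (by positivity)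
      have h1 : (((a.length - ta.length) + (b.length - tb.length) : ℕ) : ℝ) ≤
          (⌊γ * ((a.length : ℝ) + b.length)⌋₊ : ℝ) := Nat.cast_le.mpr hcount
      rw [Nat.cast_add, Nat.cast_sub hn', Nat.cast_sub hm'] at h1
      linarith
    have t1 : (maxMatch a b : ℝ) / ((a.length : ℝ) + b.length) ≤
        (maxMatch ta tb : ℝ) / ((ta.length : ℝ) + tb.length) + γ := by
      rw [div_add' _ _ _ (ne_of_gt hQ), div_le_div_iff₀ hP hQ]
      nlinarith [mul_le_mul_of_nonneg_left hQP hM']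
    simp only [fbar]
    rw [mul_div_assoc, mul_div_assoc]
    linarith
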